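/- For n ≥ 2, α ∈ [0,1], and x ∈ [0,1], the α-Bernstein basis functions satisfy ∑_{k=0}^{n} b_{n,k}^{α}(x) = 1. -/
import Mathlib


open scoped BigOperators
open intervalIntegral Real

/-- The α-Bernstein basis function `b_{n,k}^α(x)` (for `n ≥ 2`), written with the
convention that binomial coefficients with out-of-range indices vanish. -/
noncomputable def alphaBernstein (n k : ℕ) (α x : ℝ) : ℝ :=
  (1 - α) * ((n - 2).choose k) * x ^ k * (1 - x) ^ (n - k - 1)
  + (if 2 ≤ k then (1 - α) * ((n - 2).choose (k - 2)) * x ^ (k - 1) * (1 - x) ^ (n - k) else 0)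
  + α * (n.choose k) * x ^ k * (1 - x) ^ (n - k)

/-- The normalized Riemann–Liouville fractional weight functional of order `β` on `[0,1]`:
`g ↦ Γ(β+1) ∫₀¹ (1-t)^(β-1)/Γ(β) · g t dt`. -/
noncomputable def fracWeight (β : ℝ) (g : ℝ → ℝ) : ℝ :=
  Real.Gamma (β + 1) * ∫ t in (0:ℝ)..1, (1 - t) ^ (β - 1) / Real.Gamma β * g t

/-- The fractional α-Bernstein–Kantorovich operator `K_{n,α}^β`. -/
noncomputable def fracKantorovich (n : ℕ) (α β : ℝ) (f : ℝ → ℝ) (x : ℝ) : ℝ :=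
  ∑ k ∈ Finset.range (n + 1),
    alphaBernstein n k α x * fracWeight β (fun t => f ((k + t) / (n + 1)))

/-- The correction factor `a_{n,k} = k(n+1)(β+1)/(n(kβ+1))`. -/
noncomputable def corrFactor (n k : ℕ) (β : ℝ) : ℝ :=
  (k : ℝ) * (n + 1) * (β + 1) / (n * (k * β + 1))

/-- The modified fractional α-Bernstein–Kantorovich operator `A_{n,α}^β`. -/
noncomputable def modFracKantorovich (n : ℕ) (α β : ℝ) (f : ℝ → ℝ) (x : ℝ) : ℝ :=
  ∑ k ∈ Finset.range (n + 1),
    alphaBernstein n k α x *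
      fracWeight β (fun t => f (corrFactor n k β * ((k + t) / (n + 1))))

/-- The bivariate fractional α-Bernstein–Kantorovich operator `K_{n,m,α₁,α₂}^{β₁,β₂}`. -/
noncomputable def bivFracKantorovich (n m : ℕ) (α₁ α₂ β₁ β₂ : ℝ) (f : ℝ → ℝ → ℝ)
    (x y : ℝ) : ℝ :=
  ∑ k ∈ Finset.range (n + 1), ∑ j ∈ Finset.range (m + 1),
    alphaBernstein n k α₁ x * alphaBernstein m j α₂ y *
      (Real.Gamma (β₁ + 1) * Real.Gamma (β₂ + 1) *
        ∫ t in (0:ℝ)..1, ∫ s in (0:ℝ)..1,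
          (1 - t) ^ (β₁ - 1) * (1 - s) ^ (β₂ - 1) / (Real.Gamma β₁ * Real.Gamma β₂) *
            f ((k + t) / (n + 1)) ((j + s) / (m + 1)))

lemma bern_key (m : ℕ) (x : ℝ) :
    ∑ k ∈ Finset.range (m + 1), (m.choose k : ℝ) * x ^ k * (1 - x) ^ (m - k) = 1 := by
  have h := add_pow x (1 - x) m
  simp only [add_sub_cancel, one_pow] at h
  conv_rhs => rw [h]
  exact Finset.sum_congr rfl fun k _ => by ring


theorem alphaBernstein_sum_eq_one (n : ℕ) (hn : 2 ≤ n) (α x : ℝ)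
    (hα : α ∈ Set.Icc (0:ℝ) 1) (hx : x ∈ Set.Icc (0:ℝ) 1) :
    ∑ k ∈ Finset.range (n + 1), alphaBernstein n k α x = 1 := by
  simp only [alphaBernstein]
  obtain ⟨m, rfl⟩ : ∃ m, n = m + 2 := ⟨n - 2, by omega⟩
  simp only [Finset.sum_add_distrib]
  have hA : ∑ k ∈ Finset.range (m + 2 + 1),
      (1 - α) * (((m + 2 - 2).choose k : ℝ)) * x ^ k * (1 - x) ^ (m + 2 - k - 1)
      = (1 - α) * (1 - x) := by
    rw [show m + 2 + 1 = (m + 1) + 2 by ring]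
    rw [Finset.sum_range_succ, Finset.sum_range_succ]
    simp only [show m + 2 - 2 = m from rfl]
    rw [Nat.choose_eq_zero_of_lt (by omega), Nat.choose_eq_zero_of_lt (by omega)]
    simp only [Nat.cast_zero, mul_zero, zero_mul, add_zero]
    have : ∀ k ∈ Finset.range (m + 1),
        (1 - α) * ((m.choose k : ℝ)) * x ^ k * (1 - x) ^ (m + 2 - k - 1)
        = (1 - α) * (1 - x) * ((m.choose k : ℝ) * x ^ k * (1 - x) ^ (m - k)) := by
      intro k hk
      rw [Finset.mem_range] at hk
      rw [show m + 2 - k - 1 = (m - k) + 1 by omega]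
      ring
    rw [Finset.sum_congr rfl this, ← Finset.mul_sum, bern_key, mul_one]
  have hB : ∑ k ∈ Finset.range (m + 2 + 1),
      (if 2 ≤ k then (1 - α) * (((m + 2 - 2).choose (k - 2) : ℝ)) * x ^ (k - 1) * (1 - x) ^ (m + 2 - k) else 0)
      = (1 - α) * x := by
    rw [show m + 2 + 1 = (m + 1) + 1 + 1 by ring]
    rw [Finset.sum_range_succ', Finset.sum_range_succ']
    simp only [show (0:ℕ) + 1 = 1 from rfl]
    norm_num
    have : ∀ k ∈ Finset.range (m + 1),
        (1 - α) * ((m.choose (k + 1 + 1 - 2) : ℝ)) * x ^ (k + 1) * (1 - x) ^ (m + 2 - (k + 1 + 1))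
        = (1 - α) * x * ((m.choose k : ℝ) * x ^ k * (1 - x) ^ (m - k)) := by
      intro k hk
      rw [Finset.mem_range] at hk
      simp only [show k + 1 + 1 - 2 = k from rfl, show m + 2 - (k + 1 + 1) = m - k by omega]
      ring
    rw [Finset.sum_congr rfl this, ← Finset.mul_sum, bern_key, mul_one]
  have hC : ∑ k ∈ Finset.range (m + 2 + 1),
      α * (((m + 2).choose k : ℝ)) * x ^ k * (1 - x) ^ (m + 2 - k) = α := by
    have : ∀ k ∈ Finset.range (m + 2 + 1),
        α * (((m + 2).choose k : ℝ)) * x ^ k * (1 - x) ^ (m + 2 - k)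
        = α * (((m + 2).choose k : ℝ) * x ^ k * (1 - x) ^ (m + 2 - k)) := by
      intro k _; ring
    rw [Finset.sum_congr rfl this, ← Finset.mul_sum, bern_key, mul_one]
  rw [hA, hB, hC]; ring
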